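/- Let λ ≥ 0, γ ≥ 0 with λ·γ < 1, let z ∈ ℝⁿ, and let x̂ ∈ ℝⁿ be a minimizer of x ↦ C_{λ,γ}(x|z). Then for all indices i, m: if |z_i| = |z_m| then |x̂_i| = |x̂_m|. -/

import Mathlib

open Finset

/-- The penalty `P_gamma(x) = gamma * (sum_{i<m} |x_i| |x_m|) + sum_i |x_i|` on R^n. -/
noncomputable def P (n : ℕ) (γ : ℝ) (x : Fin n → ℝ) : ℝ :=
  γ * (∑ i : Fin n, ∑ m ∈ Finset.Ioi i, |x i| * |x m|) + ∑ i : Fin n, |x i|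

/-- The cost `C_{lam,gamma}(x|z) = (1/2) sum (z_i - x_i)^2 + lam * P_gamma(x)`. -/
noncomputable def C (n : ℕ) (lam γ : ℝ) (z x : Fin n → ℝ) : ℝ :=
  (1 / 2) * ∑ i : Fin n, (z i - x i) ^ 2 + lam * P n γ x

set_option maxHeartbeats 1000000 in
lemma sq_sum_eq_aux (n : ℕ) (a : Fin n → ℝ) :
    (∑ i : Fin n, a i) ^ 2
      = ∑ i : Fin n, (a i) ^ 2 + 2 * ∑ i : Fin n, ∑ j ∈ Finset.Ioi i, a i * a j := by
  have h1 : (∑ i : Fin n, a i) ^ 2 = ∑ i : Fin n, ∑ j : Fin n, a i * a j := by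
    rw [sq, Finset.sum_mul_sum]
  have h2 : ∀ i : Fin n, ∑ j : Fin n, a i * a j
      = a i * a i + (∑ j ∈ Finset.Ioi i, a i * a j + ∑ j ∈ Finset.Iio i, a i * a j) := by
    intro i
    rw [← Finset.sum_add_sum_compl {i}, Finset.sum_singleton]
    congr 1
    rw [← Finset.sum_union (Finset.disjoint_Ioi_Iio i)]
    apply Finset.sum_congr _ (fun _ _ => rfl)
    rw [← Finset.disjUnion_eq_union _ _ (Finset.disjoint_Ioi_Iio i), Finset.Ioi_disjUnion_Iio]
  have h3 : ∑ i : Fin n, ∑ j ∈ Finset.Iio i, a i * a j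
      = ∑ i : Fin n, ∑ j ∈ Finset.Ioi i, a i * a j := by
    rw [Finset.sum_comm' (t' := Finset.univ) (s' := fun j => Finset.Ioi j)]
    · exact Finset.sum_congr rfl fun i _ => Finset.sum_congr rfl fun j _ => mul_comm _ _
    · intro i j; simp
  rw [h1]
  simp_rw [h2]
  rw [Finset.sum_add_distrib, Finset.sum_add_distrib, h3,
    Finset.sum_congr rfl fun i _ => (sq (a i)).symm]
  ring

/-- Rewrite the cost in closed form using `S x = ∑ |x i|` and `∑ x i ^ 2`. -/
lemma C_eq (n : ℕ) (lam γ : ℝ) (z x : Fin n → ℝ) :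
    C n lam γ z x = (1 / 2) * ∑ i : Fin n, (z i - x i) ^ 2
      + lam * γ * (((∑ i : Fin n, |x i|) ^ 2 - ∑ i : Fin n, (x i) ^ 2) / 2)
      + lam * ∑ i : Fin n, |x i| := by
  have := sq_sum_eq_aux n (fun i => |x i|)
  simp only [sq_abs] at this
  unfold C P
  rw [show (∑ i : Fin n, ∑ m ∈ Finset.Ioi i, |x i| * |x m|)
      = (((∑ i : Fin n, |x i|) ^ 2 - ∑ i : Fin n, (x i) ^ 2) / 2) by linarith]
  ring

/-- Strict-convexity-style midpoint inequality. -/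
lemma midpoint_ineq (n : ℕ) (lam γ : ℝ) (hlam : 0 ≤ lam) (hγ : 0 ≤ γ)
    (z x y : Fin n → ℝ) :
    C n lam γ z (fun j => (x j + y j) / 2)
      ≤ (C n lam γ z x + C n lam γ z y) / 2
        - (1 - lam * γ) / 8 * ∑ j : Fin n, (x j - y j) ^ 2 := by
  set D := ∑ j : Fin n, (x j - y j) ^ 2 with hD
  set Sx := ∑ j : Fin n, |x j|
  set Sy := ∑ j : Fin n, |y j|
  set Sw := ∑ j : Fin n, |(x j + y j) / 2|
  have hF1 : ∑ j : Fin n, (z j - (x j + y j) / 2) ^ 2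
      = (∑ j : Fin n, (z j - x j) ^ 2 + ∑ j : Fin n, (z j - y j) ^ 2) / 2 - D / 4 := by
    have h : ∀ j : Fin n, (z j - (x j + y j) / 2) ^ 2
        = (z j - x j) ^ 2 / 2 + (z j - y j) ^ 2 / 2 - (x j - y j) ^ 2 / 4 := fun j => by ring
    rw [hD, Finset.sum_congr rfl fun j _ => h j, Finset.sum_sub_distrib,
      Finset.sum_add_distrib, ← Finset.sum_div, ← Finset.sum_div, ← Finset.sum_div]
    ring
  have hF2 : ∑ j : Fin n, ((x j + y j) / 2) ^ 2
      = (∑ j : Fin n, (x j) ^ 2 + ∑ j : Fin n, (y j) ^ 2) / 2 - D / 4 := by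
    have h : ∀ j : Fin n, ((x j + y j) / 2) ^ 2
        = (x j) ^ 2 / 2 + (y j) ^ 2 / 2 - (x j - y j) ^ 2 / 4 := fun j => by ring
    rw [hD, Finset.sum_congr rfl fun j _ => h j, Finset.sum_sub_distrib,
      Finset.sum_add_distrib, ← Finset.sum_div, ← Finset.sum_div, ← Finset.sum_div]
    ring
  have hF3 : Sw ≤ (Sx + Sy) / 2 := by
    have h : ∀ j : Fin n, |(x j + y j) / 2| ≤ (|x j| + |y j|) / 2 := by
      intro j
      rw [abs_div, abs_two]
      exact (div_le_div_iff_of_pos_right two_pos).mpr (abs_add_le _ _)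
    calc Sw ≤ ∑ j : Fin n, (|x j| + |y j|) / 2 := Finset.sum_le_sum fun j _ => h j
      _ = (Sx + Sy) / 2 := by rw [← Finset.sum_div, Finset.sum_add_distrib]
  have hSw0 : 0 ≤ Sw := Finset.sum_nonneg fun j _ => abs_nonneg _
  have hF4 : Sw ^ 2 ≤ (Sx ^ 2 + Sy ^ 2) / 2 := by
    have h1 : Sw ^ 2 ≤ ((Sx + Sy) / 2) ^ 2 := by
      apply pow_le_pow_left₀ hSw0 hF3
    nlinarith [sq_nonneg (Sx - Sy)]
  have hlγ0 : 0 ≤ lam * γ := mul_nonneg hlam hγ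
  rw [C_eq, C_eq, C_eq, hF1, hF2]
  show (1/2) * _ + lam * γ * ((Sw ^ 2 - _) / 2) + lam * Sw ≤ _
  nlinarith [mul_le_mul_of_nonneg_left hF4 hlγ0, mul_le_mul_of_nonneg_left hF3 hlam]

/-- Prop. 2(c): the minimizer treats equal-magnitude inputs equally. -/
theorem thold_equal (n : ℕ) (lam γ : ℝ) (hlam : 0 ≤ lam) (hγ : 0 ≤ γ)
    (hlγ : lam * γ < 1) (z xh : Fin n → ℝ)
    (hmin : ∀ x, C n lam γ z xh ≤ C n lam γ z x) :
    ∀ i m : Fin n, |z i| = |z m| → |xh i| = |xh m| := by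
  intro i m hz
  by_cases him : i = m
  · rw [him]
  -- choose the sign ε
  obtain ⟨ε, hε1, hzi⟩ : ∃ ε : ℝ, |ε| = 1 ∧ z i = ε * z m := by
    rcases abs_eq_abs.mp hz with h | h
    · exact ⟨1, by norm_num, by linarith⟩
    · exact ⟨-1, by norm_num, by linarith⟩
  have hε2 : ε * ε = 1 := by
    rcases abs_eq (by norm_num : (0:ℝ) ≤ 1) |>.mp hε1 with h | h <;> rw [h] <;> norm_num
  have hzm : z m = ε * z i := by rw [hzi]; rw [← mul_assoc, hε2, one_mul]
  -- the swapped candidate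
  set y : Fin n → ℝ := fun j => if j = i then ε * xh m else if j = m then ε * xh i else xh j
    with hy
  have hyi : y i = ε * xh m := by simp [hy]
  have hym : y m = ε * xh i := by simp [hy, him, Ne.symm him]
  have hyo : ∀ j, j ≠ i → j ≠ m → y j = xh j := by intro j h1 h2; simp [hy, h1, h2]
  -- y has the same cost as xh
  have habs : ∀ j, |y j| = |xh (Equiv.swap i m j)| := by
    intro j
    by_cases h1 : j = i
    · subst h1; rw [hyi, abs_mul, hε1, one_mul, Equiv.swap_apply_left]
    by_cases h2 : j = m
    · subst h2; rw [hym, abs_mul, hε1, one_mul, Equiv.swap_apply_right]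
    · rw [hyo j h1 h2, Equiv.swap_apply_of_ne_of_ne h1 h2]
  have hS : ∑ j : Fin n, |y j| = ∑ j : Fin n, |xh j| := by
    rw [Finset.sum_congr rfl fun j _ => habs j]
    exact Equiv.sum_comp (Equiv.swap i m) (fun j => |xh j|)
  have hN : ∑ j : Fin n, (y j) ^ 2 = ∑ j : Fin n, (xh j) ^ 2 := by
    have : ∀ j, (y j) ^ 2 = (xh (Equiv.swap i m j)) ^ 2 := by
      intro j; rw [← sq_abs, habs j, sq_abs]
    rw [Finset.sum_congr rfl fun j _ => this j]
    exact Equiv.sum_comp (Equiv.swap i m) (fun j => (xh j) ^ 2)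
  have hE : ∑ j : Fin n, (z j - y j) ^ 2 = ∑ j : Fin n, (z j - xh j) ^ 2 := by
    have hpt : ∀ j, (z j - y j) ^ 2 = (z (Equiv.swap i m j) - xh (Equiv.swap i m j)) ^ 2 := by
      intro j
      by_cases h1 : j = i
      · subst h1
        rw [hyi, Equiv.swap_apply_left, hzi]
        have h : (ε * z m - ε * xh m) ^ 2 = ε ^ 2 * (z m - xh m) ^ 2 := by ring
        rw [h, show ε ^ 2 = 1 from by rw [sq]; exact hε2, one_mul]
      by_cases h2 : j = m
      · subst h2
        rw [hym, Equiv.swap_apply_right, hzm]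
        have h : (ε * z i - ε * xh i) ^ 2 = ε ^ 2 * (z i - xh i) ^ 2 := by ring
        rw [h, show ε ^ 2 = 1 from by rw [sq]; exact hε2, one_mul]
      · rw [hyo j h1 h2, Equiv.swap_apply_of_ne_of_ne h1 h2]
    rw [Finset.sum_congr rfl fun j _ => hpt j]
    exact Equiv.sum_comp (Equiv.swap i m) (fun j => (z j - xh j) ^ 2)
  have hCy : C n lam γ z y = C n lam γ z xh := by
    rw [C_eq, C_eq, hS, hN, hE]
  -- midpoint argument
  set w : Fin n → ℝ := fun j => (xh j + y j) / 2 with hw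
  have hmid := midpoint_ineq n lam γ hlam hγ z xh y
  have h1 : C n lam γ z xh ≤ C n lam γ z w := hmin w
  rw [hCy] at hmid
  have hDle : (1 - lam * γ) / 8 * ∑ j : Fin n, (xh j - y j) ^ 2 ≤ 0 := by
    have := h1.trans hmid
    linarith
  have hpos : 0 < (1 - lam * γ) / 8 := by linarith
  have hD0 : ∑ j : Fin n, (xh j - y j) ^ 2 ≤ 0 := by
    by_contra h
    push_neg at h
    nlinarith
  have hterm : (xh i - y i) ^ 2 ≤ 0 := by
    have h := Finset.single_le_sum (f := fun j => (xh j - y j) ^ 2)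
      (fun j _ => sq_nonneg _) (Finset.mem_univ i)
    linarith
  have h0 : (xh i - y i) ^ 2 = 0 := le_antisymm hterm (sq_nonneg _)
  have : xh i = y i := by
    have := pow_eq_zero_iff (n := 2) (by norm_num) |>.mp h0
    linarith
  rw [this, hyi, abs_mul, hε1, one_mul]
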